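/- The space ℓ¹ (real summable sequences with the norm ‖x‖₁ = ∑|x_i|) does not have Carathéodory's approximation property: for every integer k ≥ 1 there exist a finite subset S of the closed unit ball of ℓ¹ and a point a ∈ conv S such that dist(a, conv_k S) ≥ 1/4. In particular, there is no function f : ℕ → [0, ∞) with f(k) → 0 such that h⁺(conv S, conv_k S) ≤ f(k) for every subset S of the unit ball of ℓ¹. -/

import Mathlib

open scoped ENNReal

/-- The `k`-convex hull of a set `S`: all convex combinations of at most `k` points
of `S`. -/
def convHullK {X : Type*} [NormedAddCommGroup X] [NormedSpace ℝ X] (k : ℕ) (S : Set X) :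
    Set X :=
  ⋃ (F : Finset X) (_ : ↑F ⊆ S) (_ : F.card ≤ k), convexHull ℝ (F : Set X)

/-- `ℓ¹` fails Carathéodory's approximation property: for every `k ≥ 1` there is a finite
subset `S` of the unit ball of `ℓ¹` and `a ∈ conv S` with `dist(a, conv_k S) ≥ 1/4`; in
particular no function `f : ℕ → [0, ∞)` tending to `0` can bound
`h⁺(conv S, conv_k S) ≤ f k` for all subsets `S` of the unit ball. -/
noncomputable abbrev E₁ : Type := lp (fun _ : ℕ => ℝ) 1

noncomputable def e₁ (i : ℕ) : E₁ := lp.single 1 i (1 : ℝ)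

lemma e₁_apply (i j : ℕ) : (e₁ i : ℕ → ℝ) j = if j = i then 1 else 0 := by
  by_cases h : j = i
  · subst h; simp [e₁, lp.single_apply_self]
  · simp [e₁, lp.single_apply_ne _ _ _ h, h]

lemma norm_e₁ (i : ℕ) : ‖e₁ i‖ = 1 := by
  have := lp.norm_single (p := 1) (E := fun _ : ℕ => ℝ) (by norm_num) i (1:ℝ)
  simpa [e₁] using this

lemma e₁_inj : Function.Injective e₁ := by
  intro i j h
  by_contra hij
  have h1 : (e₁ i : ℕ → ℝ) i = 1 := by simp [e₁_apply]
  have h2 : (e₁ j : ℕ → ℝ) i = 0 := by simp [e₁_apply, hij]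
  rw [h] at h1
  rw [h1] at h2
  norm_num at h2

noncomputable def evL (j : ℕ) : E₁ →ₗ[ℝ] ℝ where
  toFun x := x j
  map_add' x y := by simp
  map_smul' c x := by simp

lemma main (k : ℕ) (hk : 1 ≤ k) :
    ∃ S : Set E₁, S.Finite ∧ S ⊆ Metric.closedBall 0 1 ∧
      ∃ a ∈ convexHull ℝ S, (1 / 4 : ℝ) ≤ Metric.infDist a (convHullK k S) := by
  classical
  set n := 2 * k with hn
  have hn0 : 0 < n := by omega
  set S : Set E₁ := e₁ '' (Set.Iio n) with hS
  refine ⟨S, (Set.finite_Iio n).image _, ?_, ?_⟩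
  · rintro x ⟨i, _, rfl⟩
    simp [Metric.mem_closedBall, dist_eq_norm, norm_e₁]
  set a : E₁ := (Finset.range n).centerMass (fun _ => (1:ℝ)) e₁ with ha
  have hsum : ∑ _i ∈ Finset.range n, (1:ℝ) = n := by simp
  have haconv : a ∈ convexHull ℝ S := by
    refine Finset.centerMass_mem_convexHull _ (fun i _ => zero_le_one) ?_ ?_
    · rw [hsum]; positivity
    · intro i hi
      exact ⟨i, Finset.mem_range.mp hi, rfl⟩
  -- coordinates of a
  have ha_apply : ∀ j : ℕ, (a : ℕ → ℝ) j = if j < n then (n : ℝ)⁻¹ else 0 := by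
    intro j
    have : a = (n : ℝ)⁻¹ • ∑ i ∈ Finset.range n, e₁ i := by
      simp [ha, Finset.centerMass, hsum]
    rw [this, lp.coeFn_smul, Pi.smul_apply, lp.coeFn_sum, Finset.sum_apply]
    simp only [e₁_apply]
    rw [Finset.sum_ite_eq (Finset.range n) j (fun _ => (1:ℝ))]
    by_cases h : j < n <;> simp [h, Finset.mem_range]
  refine ⟨a, haconv, ?_⟩
  -- key claim
  have key : ∀ x ∈ convHullK k S, (1/4 : ℝ) ≤ dist a x := by
    intro x hx
    rw [convHullK] at hx
    simp only [Set.mem_iUnion] at hx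
    obtain ⟨F, hFS, hFk, hxF⟩ := hx
    set T : Finset ℕ := (Finset.range n).filter (fun i => e₁ i ∈ F) with hT
    have hTcard : T.card ≤ k := by
      refine le_trans (Finset.card_le_card_of_injOn e₁ ?_ ?_) hFk
      · intro i hi; exact (Finset.mem_filter.mp hi).2
      · exact fun i _ j _ h => e₁_inj h
    -- off T, coordinates of x vanish
    have hxj : ∀ j ∈ Finset.range n \ T, (x : ℕ → ℝ) j = 0 := by
      intro j hj
      rw [Finset.mem_sdiff, Finset.mem_range] at hj
      have hF0 : evL j '' (F : Set E₁) ⊆ {0} := by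
        rintro - ⟨f, hf, rfl⟩
        obtain ⟨i, hi, rfl⟩ := hFS hf
        have hji : j ≠ i := by
          rintro rfl
          exact hj.2 (Finset.mem_filter.mpr ⟨Finset.mem_range.mpr hj.1, hf⟩)
        show (e₁ i : ℕ → ℝ) j = 0
        simp [evL, e₁_apply, hji]
      have : evL j x ∈ convexHull ℝ (evL j '' (F : Set E₁)) := by
        rw [← (evL j).image_convexHull]
        exact ⟨x, hxF, rfl⟩
      have := convexHull_mono hF0 this
      rwa [convexHull_singleton, Set.mem_singleton_iff] at this
    -- norm estimate
    have hhs := lp.hasSum_norm (p := 1) (E := fun _ : ℕ => ℝ) (by norm_num) (a - x)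
    simp only [ENNReal.toReal_one, Real.rpow_one] at hhs
    have hle : ∑ j ∈ Finset.range n \ T, ‖(a - x : E₁) j‖ ≤ ‖a - x‖ := by
      simpa using sum_le_hasSum (Finset.range n \ T) (fun j _ => norm_nonneg _) hhs
    have hterm : ∀ j ∈ Finset.range n \ T, ‖(a - x : E₁) j‖ = (n : ℝ)⁻¹ := by
      intro j hj
      have hjn := (Finset.mem_sdiff.mp hj).1
      rw [lp.coeFn_sub, Pi.sub_apply, hxj j hj, ha_apply, if_pos (Finset.mem_range.mp hjn)]
      rw [sub_zero, Real.norm_eq_abs, abs_of_nonneg (inv_nonneg.mpr (Nat.cast_nonneg n))]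
    have hcard : k ≤ (Finset.range n \ T).card := by
      have hTsub : T ⊆ Finset.range n := Finset.filter_subset _ _
      rw [Finset.card_sdiff_of_subset hTsub, Finset.card_range]
      omega
    have : (1/2 : ℝ) ≤ ∑ j ∈ Finset.range n \ T, ‖(a - x : E₁) j‖ := by
      rw [Finset.sum_congr rfl hterm, Finset.sum_const, nsmul_eq_mul]
      have : (k : ℝ) * (n:ℝ)⁻¹ ≤ ((Finset.range n \ T).card : ℝ) * (n:ℝ)⁻¹ :=
        mul_le_mul_of_nonneg_right (by exact_mod_cast hcard) (inv_nonneg.mpr (Nat.cast_nonneg n))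
      refine le_trans ?_ this
      have hkne : (k:ℝ) ≠ 0 := Nat.cast_ne_zero.mpr (by omega)
      have heq : (k:ℝ) * ((n:ℝ))⁻¹ = 1/2 := by
        rw [hn]; push_cast; field_simp
      rw [heq]
    rw [dist_eq_norm]
    linarith
  -- nonempty
  have hne : (convHullK k S).Nonempty := by
    refine ⟨e₁ 0, ?_⟩
    rw [convHullK]
    simp only [Set.mem_iUnion]
    refine ⟨{e₁ 0}, ?_, by simpa using hk, subset_convexHull ℝ _ (by simp)⟩
    simp only [Finset.coe_singleton, Set.singleton_subset_iff]
    exact ⟨0, hn0, rfl⟩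
  by_contra h
  push_neg at h
  obtain ⟨y, hy, hdy⟩ := (Metric.infDist_lt_iff hne).mp h
  exact absurd hdy (not_lt.mpr (key y hy))


theorem l1_no_caratheodory_approximation :
    (∀ k : ℕ, 1 ≤ k →
      ∃ S : Set (lp (fun _ : ℕ => ℝ) 1), S.Finite ∧ S ⊆ Metric.closedBall 0 1 ∧
        ∃ a ∈ convexHull ℝ S, (1 / 4 : ℝ) ≤ Metric.infDist a (convHullK k S)) ∧
    ¬ ∃ f : ℕ → ℝ, (∀ k, 0 ≤ f k) ∧ Filter.Tendsto f Filter.atTop (nhds 0) ∧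
        ∀ S : Set (lp (fun _ : ℕ => ℝ) 1), S ⊆ Metric.closedBall 0 1 →
          ∀ k : ℕ, 1 ≤ k → ∀ a ∈ convexHull ℝ S,
            Metric.infDist a (convHullK k S) ≤ f k := by
  refine ⟨main, ?_⟩
  rintro ⟨f, -, hf0, hfb⟩
  have hlb : ∀ k : ℕ, 1 ≤ k → (1/4 : ℝ) ≤ f k := by
    intro k hk
    obtain ⟨S, -, hSb, a, haS, hd⟩ := main k hk
    exact le_trans hd (hfb S hSb k hk a haS)
  have := hf0.eventually (eventually_lt_nhds (show (0:ℝ) < 1/4 by norm_num))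
  obtain ⟨N, hN⟩ := this.exists_forall_of_atTop
  have h1 := hlb (max N 1) (le_max_right _ _)
  have h2 := hN (max N 1) (le_max_left _ _)
  linarith
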